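/- Let m ≥ 1 be an integer and let T ⊂ ℝ² be the convex hull of three affinely independent points a, b, c ∈ ℤ² such that T contains no lattice point in its interior and the three edges [a,b], [b,c], [c,a] have lattice lengths 1, 1 and m+1 (in some order). Then T is unimodularly equivalent to the triangle conv{(0,0),(m+1,0),(0,1)}. -/

import Mathlib

/-- The inclusion of lattice points `ℤ² ⊆ ℝ²` (coordinatewise coercion). -/
def toReal2 (v : Fin 2 → ℤ) : Fin 2 → ℝ := fun i => (v i : ℝ)

/-- The affine unimodular map `x ↦ A x + b` of `ℝ²` determined by an integer matrix `A`
and an integer vector `b`. -/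
def affineUnimodularMap (A : Matrix (Fin 2) (Fin 2) ℤ) (b : Fin 2 → ℤ) (x : Fin 2 → ℝ) :
    Fin 2 → ℝ :=
  (A.map (Int.cast : ℤ → ℝ)).mulVec x + toReal2 b

/-- The lattice length of the segment joining two points of `ℤ²`: the number of lattice
points on it minus one, i.e. the gcd of the coordinate differences. -/
def latticeLength (p q : Fin 2 → ℤ) : ℕ := Int.gcd (q 0 - p 0) (q 1 - p 1)

lemma mulVec2 (N : Matrix (Fin 2) (Fin 2) ℤ) (z : Fin 2 → ℤ) (i : Fin 2) :
    N.mulVec z i = N i 0 * z 0 + N i 1 * z 1 := by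
  simp [Matrix.mulVec, dotProduct, Fin.sum_univ_two]

lemma toReal2_add (z w : Fin 2 → ℤ) : toReal2 (z + w) = toReal2 z + toReal2 w := by
  funext i; simp [toReal2]

lemma cast_mulVec (A : Matrix (Fin 2) (Fin 2) ℤ) (z : Fin 2 → ℤ) :
    (A.map (Int.cast : ℤ → ℝ)).mulVec (toReal2 z) = toReal2 (A.mulVec z) := by
  funext i
  simp [Matrix.mulVec, dotProduct, Fin.sum_univ_two, toReal2, Matrix.map_apply]

lemma aum_apply (A : Matrix (Fin 2) (Fin 2) ℤ) (v : Fin 2 → ℤ) (z : Fin 2 → ℤ) :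
    affineUnimodularMap A v (toReal2 z) = toReal2 (A.mulVec z + v) := by
  rw [affineUnimodularMap, cast_mulVec, toReal2_add]

/-- `affineUnimodularMap` as an affine map. -/
noncomputable def aum (A : Matrix (Fin 2) (Fin 2) ℤ) (v : Fin 2 → ℤ) : (Fin 2 → ℝ) →ᵃ[ℝ] (Fin 2 → ℝ) where
  toFun := affineUnimodularMap A v
  linear := Matrix.mulVecLin (A.map (Int.cast : ℤ → ℝ))
  map_vadd' p w := by
    simp only [affineUnimodularMap, Matrix.mulVecLin_apply, vadd_eq_add, Matrix.mulVec_add]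
    abel

lemma aum_coe (A : Matrix (Fin 2) (Fin 2) ℤ) (v : Fin 2 → ℤ) :
    ⇑(aum A v) = affineUnimodularMap A v := rfl

lemma aum_cont (A : Matrix (Fin 2) (Fin 2) ℤ) (v : Fin 2 → ℤ) :
    Continuous (affineUnimodularMap A v) := by
  have : Continuous fun z : Fin 2 → ℝ => (A.map (Int.cast : ℤ → ℝ)).mulVec z :=
    (Matrix.mulVecLin (A.map (Int.cast : ℤ → ℝ))).continuous_of_finiteDimensional
  exact this.add continuous_const

lemma gcd_dvd_mulVec (N : Matrix (Fin 2) (Fin 2) ℤ) (z : Fin 2 → ℤ) (i : Fin 2) :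
    (Int.gcd (z 0) (z 1) : ℤ) ∣ N.mulVec z i := by
  rw [mulVec2]
  exact dvd_add (Dvd.dvd.mul_left (Int.gcd_dvd_left _ _) _) (Dvd.dvd.mul_left (Int.gcd_dvd_right _ _) _)

lemma inv_int (M : Matrix (Fin 2) (Fin 2) ℤ) (h : M.det = 1 ∨ M.det = -1) :
    (M.det • M.adjugate) * M = 1 ∧ M * (M.det • M.adjugate) = 1 := by
  constructor
  · rw [Matrix.smul_mul, Matrix.adjugate_mul]
    rcases h with h | h <;> rw [h] <;> norm_num
  · rw [Matrix.mul_smul, Matrix.mul_adjugate]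
    rcases h with h | h <;> rw [h] <;> norm_num

lemma gcd_mulVec (M : Matrix (Fin 2) (Fin 2) ℤ) (h : M.det = 1 ∨ M.det = -1) (z : Fin 2 → ℤ) :
    Int.gcd (M.mulVec z 0) (M.mulVec z 1) = Int.gcd (z 0) (z 1) := by
  obtain ⟨hNM, hMN⟩ := inv_int M h
  have hz : z = (M.det • M.adjugate).mulVec (M.mulVec z) := by
    rw [Matrix.mulVec_mulVec, hNM, Matrix.one_mulVec]
  apply Nat.dvd_antisymm
  · apply Int.natCast_dvd_natCast.mp
    apply Int.dvd_coe_gcd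
    · conv_rhs => rw [hz]
      exact gcd_dvd_mulVec _ _ 0
    · conv_rhs => rw [hz]
      exact gcd_dvd_mulVec _ _ 1
  · apply Int.natCast_dvd_natCast.mp
    exact Int.dvd_coe_gcd (gcd_dvd_mulVec _ _ 0) (gcd_dvd_mulVec _ _ 1)

lemma combo_mem_hull (v1 v2 v3 : Fin 2 → ℝ) {l1 l2 l3 : ℝ} (h1 : 0 ≤ l1) (h2 : 0 ≤ l2)
    (h3 : 0 ≤ l3) (hs : l1 + l2 + l3 = 1) :
    l1 • v1 + l2 • v2 + l3 • v3 ∈ convexHull ℝ ({v1, v2, v3} : Set (Fin 2 → ℝ)) := by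
  have hw : ∑ i : Fin 3, (![l1, l2, l3]) i = 1 := by
    simp [Fin.sum_univ_three, hs]
  have := Finset.centerMass_mem_convexHull (Finset.univ : Finset (Fin 3))
    (w := ![l1, l2, l3]) (z := ![v1, v2, v3]) (s := ({v1, v2, v3} : Set (Fin 2 → ℝ)))
    (by intro i _; fin_cases i <;> simpa)
    (by rw [hw]; norm_num)
    (by intro i _; fin_cases i <;> simp)
  rwa [Finset.centerMass_eq_of_sum_1 _ _ hw, Fin.sum_univ_three] at this

lemma pair_cases {x y u v : ℕ} (h : ({x, y} : Multiset ℕ) = {u, v}) :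
    (x = u ∧ y = v) ∨ (x = v ∧ y = u) := by
  have hx : x = u ∨ x = v := by
    have : x ∈ ({u, v} : Multiset ℕ) := h ▸ (by simp)
    simpa using this
  rcases hx with hx | hx
  · left
    refine ⟨hx, ?_⟩
    rw [hx] at h
    rw [show ({u, y} : Multiset ℕ) = u ::ₘ {y} from rfl,
      show ({u, v} : Multiset ℕ) = u ::ₘ {v} from rfl, Multiset.cons_inj_right] at h
    simpa using h
  · right
    refine ⟨hx, ?_⟩
    rw [hx] at h
    rw [show ({u, v} : Multiset ℕ) = u ::ₘ v ::ₘ (0 : Multiset ℕ) from rfl,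
      Multiset.cons_swap] at h
    rw [show ({v, y} : Multiset ℕ) = v ::ₘ y ::ₘ (0 : Multiset ℕ) from rfl,
      Multiset.cons_inj_right] at h
    simpa using h

lemma multiset_cases {l1 l2 l3 M : ℕ} (hM : M ≠ 1)
    (h : ({l1, l2, l3} : Multiset ℕ) = {1, 1, M}) :
    (l1 = M ∧ l2 = 1 ∧ l3 = 1) ∨ (l1 = 1 ∧ l2 = M ∧ l3 = 1) ∨ (l1 = 1 ∧ l2 = 1 ∧ l3 = M) := by
  have h1 : l1 = 1 ∨ l1 = M := by
    have : l1 ∈ ({1, 1, M} : Multiset ℕ) := h ▸ (by simp)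
    simpa using this
  rcases h1 with h1 | h1
  · rw [h1] at h
    have h' : ({l2, l3} : Multiset ℕ) = {1, M} := by
      rwa [show ({1, 1, M} : Multiset ℕ) = 1 ::ₘ {1, M} from rfl,
        show ({1, l2, l3} : Multiset ℕ) = 1 ::ₘ {l2, l3} from rfl,
        Multiset.cons_inj_right] at h
    rcases pair_cases h' with ⟨h2, h3⟩ | ⟨h2, h3⟩
    · right; right; exact ⟨h1, h2, h3⟩
    · right; left; exact ⟨h1, h2, h3⟩
  · rw [h1] at h
    have hsw : ({1, 1, M} : Multiset ℕ) = M ::ₘ {1, 1} := by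
      rw [show ({1, 1, M} : Multiset ℕ) = 1 ::ₘ 1 ::ₘ M ::ₘ (0 : Multiset ℕ) from rfl,
        Multiset.cons_swap 1 M, Multiset.cons_swap 1 M]
      rfl
    rw [hsw] at h
    have h' : ({l2, l3} : Multiset ℕ) = {1, 1} := by
      rwa [show ({M, l2, l3} : Multiset ℕ) = M ::ₘ {l2, l3} from rfl,
        Multiset.cons_inj_right] at h
    rcases pair_cases h' with ⟨h2, h3⟩ | ⟨h2, h3⟩ <;>
      · left; exact ⟨h1, h2, h3⟩

lemma det_ne_zero {a b c : Fin 2 → ℤ}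
    (hcol : ¬ Collinear ℝ ({toReal2 a, toReal2 b, toReal2 c} : Set (Fin 2 → ℝ)))
    (hu : Int.gcd (a 0 - c 0) (a 1 - c 1) = 1) :
    (a 0 - c 0) * (b 1 - c 1) - (a 1 - c 1) * (b 0 - c 0) ≠ 0 := by
  intro hδ
  apply hcol
  rw [collinear_iff_of_mem (show toReal2 c ∈ ({toReal2 a, toReal2 b, toReal2 c} :
    Set (Fin 2 → ℝ)) by simp)]
  refine ⟨toReal2 a - toReal2 c, ?_⟩
  have hune : ¬(a 0 - c 0 = 0 ∧ a 1 - c 1 = 0) := by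
    rintro ⟨e0, e1⟩
    rw [e0, e1] at hu
    simp [Int.gcd] at hu
  intro z hz
  rcases hz with hz | hz | hz
  · exact ⟨1, by rw [hz]; funext i; simp [toReal2]⟩
  · rcases (by tauto : a 0 - c 0 ≠ 0 ∨ a 1 - c 1 ≠ 0) with hne | hne
    · refine ⟨((b 0 : ℝ) - c 0) / ((a 0 : ℝ) - c 0), ?_⟩
      have hne' : ((a 0 : ℝ) - c 0) ≠ 0 := by
        intro h'; apply hne; exact_mod_cast h'
      rw [hz]; funext i
      have hδ' : ((a 0 : ℝ) - c 0) * ((b 1 : ℝ) - c 1) -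
          ((a 1 : ℝ) - c 1) * ((b 0 : ℝ) - c 0) = 0 := by exact_mod_cast hδ
      fin_cases i <;>
        · simp only [toReal2, Pi.vadd_apply, Pi.sub_apply, vadd_eq_add, Pi.add_apply,
            Pi.smul_apply, smul_eq_mul, Fin.isValue, Fin.zero_eta, Fin.mk_one]
          field_simp
          try ring_nf
          all_goals (ring_nf at hδ' ⊢; linarith [hδ'])
    · refine ⟨((b 1 : ℝ) - c 1) / ((a 1 : ℝ) - c 1), ?_⟩
      have hne' : ((a 1 : ℝ) - c 1) ≠ 0 := by
        intro h'; apply hne; exact_mod_cast h'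
      rw [hz]; funext i
      have hδ' : ((a 0 : ℝ) - c 0) * ((b 1 : ℝ) - c 1) -
          ((a 1 : ℝ) - c 1) * ((b 0 : ℝ) - c 0) = 0 := by exact_mod_cast hδ
      fin_cases i <;>
        · simp only [toReal2, Pi.vadd_apply, Pi.sub_apply, vadd_eq_add, Pi.add_apply,
            Pi.smul_apply, smul_eq_mul, Fin.isValue, Fin.zero_eta, Fin.mk_one]
          field_simp
          try ring_nf
          all_goals (ring_nf at hδ' ⊢; linarith [hδ'])
  · exact ⟨0, by rw [hz]; funext i; simp [toReal2]⟩

lemma aum_combo (A : Matrix (Fin 2) (Fin 2) ℤ) (v : Fin 2 → ℤ) (w1 w2 w3 : Fin 2 → ℝ)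
    (l1 l2 l3 : ℝ) (h : l1 + l2 + l3 = 1) (i : Fin 2) :
    affineUnimodularMap A v (l1 • w1 + l2 • w2 + l3 • w3) i =
      l1 * affineUnimodularMap A v w1 i + l2 * affineUnimodularMap A v w2 i +
        l3 * affineUnimodularMap A v w3 i := by
  simp only [affineUnimodularMap, Pi.add_apply, Matrix.mulVec, dotProduct,
    Fin.sum_univ_two, Pi.smul_apply, smul_eq_mul, toReal2, Matrix.map_apply]
  linear_combination (-(v i : ℝ)) * h

set_option maxHeartbeats 1000000 in
lemma main_case (m : ℕ) (a b c : Fin 2 → ℤ)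
    (hcol : ¬ Collinear ℝ ({toReal2 a, toReal2 b, toReal2 c} : Set (Fin 2 → ℝ)))
    (hint : ∀ p : Fin 2 → ℤ,
      toReal2 p ∉ interior (convexHull ℝ ({toReal2 a, toReal2 b, toReal2 c} : Set (Fin 2 → ℝ))))
    (h1 : latticeLength a b = m + 1) (h2 : latticeLength b c = 1)
    (h3 : latticeLength c a = 1) :
    ∃ (A : Matrix (Fin 2) (Fin 2) ℤ) (v : Fin 2 → ℤ),
      (A.det = 1 ∨ A.det = -1) ∧
      affineUnimodularMap A v ''
          convexHull ℝ ({toReal2 a, toReal2 b, toReal2 c} : Set (Fin 2 → ℝ)) =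
        convexHull ℝ ({![0, 0], ![(m : ℝ) + 1, 0], ![0, 1]} : Set (Fin 2 → ℝ)) := by
  -- basic data
  have hu : Int.gcd (a 0 - c 0) (a 1 - c 1) = 1 := h3
  have hw : Int.gcd (b 0 - c 0) (b 1 - c 1) = 1 := by
    have h2' : Int.gcd (c 0 - b 0) (c 1 - b 1) = 1 := h2
    rwa [show c 0 - b 0 = -(b 0 - c 0) by ring, show c 1 - b 1 = -(b 1 - c 1) by ring,
      Int.neg_gcd, Int.gcd_neg] at h2'
  have hba : Int.gcd (b 0 - a 0) (b 1 - a 1) = m + 1 := h1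
  obtain ⟨X, Y, hbez⟩ : ∃ X Y, (a 0 - c 0) * X + (a 1 - c 1) * Y = 1 := by
    refine ⟨Int.gcdA (a 0 - c 0) (a 1 - c 1), Int.gcdB (a 0 - c 0) (a 1 - c 1), ?_⟩
    have := Int.gcd_eq_gcd_ab (a 0 - c 0) (a 1 - c 1)
    rw [hu] at this
    exact_mod_cast this.symm
  have hs0 : (a 1 - c 1) * (b 0 - c 0) - (a 0 - c 0) * (b 1 - c 1) ≠ 0 := by
    have := det_ne_zero hcol hu
    intro h'; exact this (by linarith)
  obtain ⟨ε, s, hε2, hsd, hspos⟩ :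
      ∃ ε s : ℤ, ε * ε = 1 ∧
        s = ε * ((a 1 - c 1) * (b 0 - c 0) - (a 0 - c 0) * (b 1 - c 1)) ∧ 0 < s := by
    rcases lt_or_gt_of_ne hs0 with h' | h'
    · exact ⟨-1, _, by norm_num, rfl, by linarith⟩
    · exact ⟨1, _, by norm_num, rfl, by linarith⟩
  set t : ℤ := -(X * (b 0 - c 0)) - Y * (b 1 - c 1) with htdef
  obtain ⟨k, t', ht', hlb, hub⟩ : ∃ k t' : ℤ, t' = t + k * s ∧ 0 ≤ t' + 1 ∧ t' + 1 < s := by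
    refine ⟨-((t + 1) / s), (t + 1) % s - 1, ?_, ?_, ?_⟩
    · rw [Int.emod_def]; ring
    · have := Int.emod_nonneg (t + 1) (ne_of_gt hspos); omega
    · have := Int.emod_lt_of_pos (t + 1) hspos; omega
  set M : Matrix (Fin 2) (Fin 2) ℤ :=
    !![ε * (a 1 - c 1), -(ε * (a 0 - c 0));
       k * ε * (a 1 - c 1) - X, -(k * ε * (a 0 - c 0)) - Y] with hMdef
  have hdet : M.det = -ε := by
    rw [hMdef, Matrix.det_fin_two_of]
    linear_combination (-ε) * hbez
  have hdet' : M.det = 1 ∨ M.det = -1 := by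
    rcases (by rcases mul_self_eq_one_iff.mp hε2 with h | h <;> [right; left] <;> exact h :
      ε = -1 ∨ ε = 1) with h | h <;> rw [hdet, h] <;> simp
  -- matrix entries
  have hM00 : M 0 0 = ε * (a 1 - c 1) := by rw [hMdef]; rfl
  have hM01 : M 0 1 = -(ε * (a 0 - c 0)) := by rw [hMdef]; rfl
  have hM10 : M 1 0 = k * ε * (a 1 - c 1) - X := by rw [hMdef]; rfl
  have hM11 : M 1 1 = -(k * ε * (a 0 - c 0)) - Y := by rw [hMdef]; rfl
  -- action on the vertices (relative to c)
  have ea0 : M.mulVec a 0 - M.mulVec c 0 = 0 := by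
    rw [mulVec2, mulVec2, hM00, hM01]; ring
  have ea1 : M.mulVec a 1 - M.mulVec c 1 = -1 := by
    rw [mulVec2, mulVec2, hM10, hM11]; linear_combination -hbez
  have eb0 : M.mulVec b 0 - M.mulVec c 0 = s := by
    rw [mulVec2, mulVec2, hM00, hM01]; linear_combination -hsd
  have eb1 : M.mulVec b 1 - M.mulVec c 1 = t' := by
    rw [mulVec2, mulVec2, hM10, hM11, ht', htdef, hsd]; ring
  have ea0e := ea0; rw [mulVec2 M a, mulVec2 M c] at ea0e
  have ea1e := ea1; rw [mulVec2 M a, mulVec2 M c] at ea1e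
  have eb0e := eb0; rw [mulVec2 M b, mulVec2 M c] at eb0e
  have eb1e := eb1; rw [mulVec2 M b, mulVec2 M c] at eb1e
  -- gcd transport
  have hgb : Int.gcd s t' = 1 := by
    have hv : M.mulVec (fun i => b i - c i) = ![s, t'] := by
      funext i
      have hexp : M.mulVec (fun i => b i - c i) i
          = M i 0 * (b 0 - c 0) + M i 1 * (b 1 - c 1) := mulVec2 M _ i
      fin_cases i
      · rw [hexp]
        show M 0 0 * (b 0 - c 0) + M 0 1 * (b 1 - c 1) = s
        linear_combination eb0e
      · rw [hexp]
        show M 1 0 * (b 0 - c 0) + M 1 1 * (b 1 - c 1) = t'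
        linear_combination eb1e
    have h := gcd_mulVec M hdet' (fun i => b i - c i)
    rw [hv] at h
    simpa [hw] using h
  have hga : Int.gcd s (t' + 1) = m + 1 := by
    have hv : M.mulVec (fun i => b i - a i) = ![s, t' + 1] := by
      funext i
      have hexp : M.mulVec (fun i => b i - a i) i
          = M i 0 * (b 0 - a 0) + M i 1 * (b 1 - a 1) := mulVec2 M _ i
      fin_cases i
      · rw [hexp]
        show M 0 0 * (b 0 - a 0) + M 0 1 * (b 1 - a 1) = s
        linear_combination eb0e - ea0e
      · rw [hexp]
        show M 1 0 * (b 0 - a 0) + M 1 1 * (b 1 - a 1) = t' + 1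
        linear_combination eb1e - ea1e
    have h := gcd_mulVec M hdet' (fun i => b i - a i)
    rw [hv] at h
    simpa [hba] using h
  rcases eq_or_lt_of_le hlb with hc | hc
  · -- the long edge is aligned: t' = -1, s = m + 1
    have hsm : s = (m : ℤ) + 1 := by
      have h0 : t' + 1 = 0 := hc.symm
      rw [h0] at hga
      simp [Int.gcd] at hga
      omega
    refine ⟨M, ![0, 1] - M.mulVec c, hdet', ?_⟩
    have e_a : M.mulVec a + (![0, 1] - M.mulVec c) = ![0, 0] := by
      funext i; fin_cases i
      · show M.mulVec a 0 + (![(0:ℤ), 1] 0 - M.mulVec c 0) = ![(0:ℤ), 0] 0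
        simp only [Matrix.cons_val_zero]
        linarith [ea0]
      · show M.mulVec a 1 + (![(0:ℤ), 1] 1 - M.mulVec c 1) = ![(0:ℤ), 0] 1
        simp only [Matrix.cons_val_one, Matrix.head_cons, Matrix.cons_val_zero]
        linarith [ea1]
    have e_b : M.mulVec b + (![0, 1] - M.mulVec c) = ![(m : ℤ) + 1, 0] := by
      funext i; fin_cases i
      · show M.mulVec b 0 + (![(0:ℤ), 1] 0 - M.mulVec c 0) = ![(m : ℤ) + 1, 0] 0
        simp only [Matrix.cons_val_zero]
        linarith [eb0, hsm]
      · show M.mulVec b 1 + (![(0:ℤ), 1] 1 - M.mulVec c 1) = ![(m : ℤ) + 1, 0] 1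
        simp only [Matrix.cons_val_one, Matrix.head_cons, Matrix.cons_val_zero]
        linarith [eb1, hc.symm]
    have e_c : M.mulVec c + (![0, 1] - M.mulVec c) = ![0, 1] := by
      funext i; fin_cases i <;> · simp [Matrix.vecHead, Matrix.vecTail]; try ring
    rw [← aum_coe, AffineMap.image_convexHull, Set.image_insert_eq, Set.image_insert_eq,
      Set.image_singleton, aum_coe, aum_apply, aum_apply, aum_apply, e_a, e_b, e_c]
    congr 1
    have t1 : toReal2 ![0, 0] = (![0, 0] : Fin 2 → ℝ) := by
      funext i; fin_cases i <;> simp [toReal2]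
    have t2 : toReal2 ![(m : ℤ) + 1, 0] = (![(m : ℝ) + 1, 0] : Fin 2 → ℝ) := by
      funext i; fin_cases i <;> simp [toReal2]
    have t3 : toReal2 ![0, 1] = (![0, 1] : Fin 2 → ℝ) := by
      funext i; fin_cases i <;> simp [toReal2]
    rw [t1, t2, t3]
  · -- impossible: there is an interior lattice point
    exfalso
    have hs2 : 2 ≤ s := by omega
    obtain ⟨X2, Y2, hbez2⟩ : ∃ X2 Y2 : ℤ, t' * X2 + s * Y2 = 1 := by
      refine ⟨Int.gcdA t' s, Int.gcdB t' s, ?_⟩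
      have h' := Int.gcd_eq_gcd_ab t' s
      rw [Int.gcd_comm, hgb] at h'
      exact_mod_cast h'.symm
    set x : ℤ := X2 % s with hxdef
    have hx0 : 0 ≤ x := Int.emod_nonneg X2 (by omega)
    have hxs : x < s := Int.emod_lt_of_pos X2 hspos
    obtain ⟨qy, hqy⟩ : ∃ qy : ℤ, t' * x - 1 = s * qy := by
      refine ⟨-Y2 - t' * (X2 / s), ?_⟩
      rw [hxdef, Int.emod_def]
      linear_combination hbez2
    have hxne0 : x ≠ 0 := by
      intro h'
      rw [h'] at hqy
      have : s ∣ 1 := ⟨-qy, by linarith⟩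
      have := Int.le_of_dvd one_pos this
      omega
    have hxnes : x ≠ s - 1 := by
      intro h'
      rw [h'] at hqy
      have hdv : s ∣ t' + 1 := ⟨t' - qy, by linarith⟩
      have := Int.le_of_dvd hc hdv
      omega
    have hx1 : 1 ≤ x := by omega
    have hx2 : x ≤ s - 2 := by omega
    -- the candidate interior lattice point, pulled back
    set NI : Matrix (Fin 2) (Fin 2) ℤ := M.det • M.adjugate with hNIdef
    obtain ⟨hNM, hMN⟩ := inv_int M hdet'
    set P : Fin 2 → ℤ := ![x, qy] with hPdef
    set p : Fin 2 → ℤ := NI.mulVec P + c with hpdef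
    have hMp : M.mulVec p = P + M.mulVec c := by
      rw [hpdef, Matrix.mulVec_add, Matrix.mulVec_mulVec, hMN, Matrix.one_mulVec]
    have hMp0 : M.mulVec p 0 - M.mulVec c 0 = x := by rw [hMp]; simp [hPdef]
    have hMp1 : M.mulVec p 1 - M.mulVec c 1 = qy := by
      rw [hMp]; simp [hPdef, Matrix.vecHead, Matrix.vecTail]
    -- the affine map and the open triangle
    set v2 : Fin 2 → ℤ := -(M.mulVec c) with hv2def
    set G : (Fin 2 → ℝ) → (Fin 2 → ℝ) := affineUnimodularMap M v2 with hGdef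
    have hGz : ∀ z : Fin 2 → ℤ, G (toReal2 z) = toReal2 (M.mulVec z + v2) := fun z => aum_apply M v2 z
    have hGcont : Continuous G := aum_cont M v2
    have hG0 : Continuous fun z : Fin 2 → ℝ => G z 0 := (continuous_apply 0).comp hGcont
    have hG1 : Continuous fun z : Fin 2 → ℝ => G z 1 := (continuous_apply 1).comp hGcont
    set O : Set (Fin 2 → ℝ) :=
      ({z | 0 < G z 0} ∩ {z | (s : ℝ) * G z 1 < (t' : ℝ) * G z 0}) ∩
        {z | ((t' : ℝ) + 1) * G z 0 < (s : ℝ) * (G z 1 + 1)} with hOdef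
    have hOopen : IsOpen O := by
      refine IsOpen.inter (IsOpen.inter ?_ ?_) ?_
      · exact isOpen_lt continuous_const hG0
      · exact isOpen_lt (continuous_const.mul hG1) (continuous_const.mul hG0)
      · exact isOpen_lt (continuous_const.mul hG0) (continuous_const.mul (hG1.add continuous_const))
    -- images of the vertices under G
    have hGa : G (toReal2 a) = toReal2 ![(0:ℤ), -1] := by
      rw [hGz]
      have hval : M.mulVec a + v2 = ![(0:ℤ), -1] := by
        funext i; fin_cases i
        · show M.mulVec a 0 + v2 0 = ![(0:ℤ), -1] 0
          simp only [hv2def, Pi.neg_apply, Matrix.cons_val_zero]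
          linarith [ea0]
        · show M.mulVec a 1 + v2 1 = ![(0:ℤ), -1] 1
          simp only [hv2def, Pi.neg_apply, Matrix.cons_val_one, Matrix.head_cons, Matrix.cons_val_zero]
          linarith [ea1]
      rw [hval]
    have hGb : G (toReal2 b) = toReal2 ![s, t'] := by
      rw [hGz]
      have hval : M.mulVec b + v2 = ![s, t'] := by
        funext i; fin_cases i
        · show M.mulVec b 0 + v2 0 = ![s, t'] 0
          simp only [hv2def, Pi.neg_apply, Matrix.cons_val_zero]
          linarith [eb0]
        · show M.mulVec b 1 + v2 1 = ![s, t'] 1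
          simp only [hv2def, Pi.neg_apply, Matrix.cons_val_one, Matrix.head_cons, Matrix.cons_val_zero]
          linarith [eb1]
      rw [hval]
    have hGc : G (toReal2 c) = toReal2 ![(0:ℤ), 0] := by
      rw [hGz]
      have hval : M.mulVec c + v2 = ![(0:ℤ), 0] := by
        funext i; fin_cases i
        · show M.mulVec c 0 + v2 0 = ![(0:ℤ), 0] 0
          simp only [hv2def, Pi.neg_apply, Matrix.cons_val_zero]
          linarith
        · show M.mulVec c 1 + v2 1 = ![(0:ℤ), 0] 1
          simp only [hv2def, Pi.neg_apply, Matrix.cons_val_one, Matrix.head_cons, Matrix.cons_val_zero]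
          linarith
      rw [hval]
    have hGp : G (toReal2 p) = toReal2 ![x, qy] := by
      rw [hGz]
      have hval : M.mulVec p + v2 = ![x, qy] := by
        funext i; fin_cases i
        · show M.mulVec p 0 + v2 0 = ![x, qy] 0
          simp only [hv2def, Pi.neg_apply, Matrix.cons_val_zero]
          linarith [hMp0]
        · show M.mulVec p 1 + v2 1 = ![x, qy] 1
          simp only [hv2def, Pi.neg_apply, Matrix.cons_val_one, Matrix.head_cons, Matrix.cons_val_zero]
          linarith [hMp1]
      rw [hval]
    -- scalar values of G at the vertices and at p
    have hGfun : ∀ z : Fin 2 → ℝ, G z = (M.map (Int.cast : ℤ → ℝ)).mulVec z + toReal2 v2 :=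
      fun z => rfl
    have ga0 : G (toReal2 a) 0 = 0 := by rw [hGa]; simp [toReal2]
    have ga1 : G (toReal2 a) 1 = -1 := by rw [hGa]; simp [toReal2]
    have gb0 : G (toReal2 b) 0 = (s : ℝ) := by rw [hGb]; simp [toReal2]
    have gb1 : G (toReal2 b) 1 = (t' : ℝ) := by rw [hGb]; simp [toReal2, Matrix.vecHead, Matrix.vecTail]
    have gc0 : G (toReal2 c) 0 = 0 := by rw [hGc]; simp [toReal2]
    have gc1 : G (toReal2 c) 1 = 0 := by rw [hGc]; simp [toReal2, Matrix.vecHead, Matrix.vecTail]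
    have gp0 : G (toReal2 p) 0 = (x : ℝ) := by rw [hGp]; simp [toReal2]
    have gp1 : G (toReal2 p) 1 = (qy : ℝ) := by rw [hGp]; simp [toReal2, Matrix.vecHead, Matrix.vecTail]
    -- injectivity of G
    have hNRMR : (NI.map (Int.cast : ℤ → ℝ)) * (M.map (Int.cast : ℤ → ℝ)) = 1 := by
      rw [show (Int.cast : ℤ → ℝ) = ⇑(Int.castRingHom ℝ) from rfl, ← Matrix.map_mul, hNM,
        Matrix.map_one _ (by simp) (by simp)]
    have hGinj : ∀ z1 z2 : Fin 2 → ℝ, G z1 = G z2 → z1 = z2 := by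
      intro z1 z2 h'
      rw [hGfun, hGfun] at h'
      have h'' : (M.map (Int.cast : ℤ → ℝ)).mulVec z1 = (M.map (Int.cast : ℤ → ℝ)).mulVec z2 :=
        add_right_cancel h'
      calc z1 = (NI.map (Int.cast : ℤ → ℝ)).mulVec ((M.map (Int.cast : ℤ → ℝ)).mulVec z1) := by
              rw [Matrix.mulVec_mulVec, hNRMR, Matrix.one_mulVec]
        _ = (NI.map (Int.cast : ℤ → ℝ)).mulVec ((M.map (Int.cast : ℤ → ℝ)).mulVec z2) := by
              rw [h'']
        _ = z2 := by rw [Matrix.mulVec_mulVec, hNRMR, Matrix.one_mulVec]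
    -- O is contained in the triangle
    have hsR : (0:ℝ) < (s : ℝ) := by exact_mod_cast hspos
    have hOsub : O ⊆ convexHull ℝ ({toReal2 a, toReal2 b, toReal2 c} : Set (Fin 2 → ℝ)) := by
      rintro z ⟨⟨hz1, hz2⟩, hz3⟩
      simp only [Set.mem_setOf_eq] at hz1 hz2 hz3
      set Xr : ℝ := G z 0 with hXrdef
      set Yr : ℝ := G z 1 with hYrdef
      set l1 : ℝ := ((t' : ℝ) * Xr - (s : ℝ) * Yr) / (s : ℝ) with hl1def
      set l2 : ℝ := Xr / (s : ℝ) with hl2def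
      set l3 : ℝ := 1 - l1 - l2 with hl3def
      have hsum : l1 + l2 + l3 = 1 := by rw [hl3def]; ring
      have hl1 : 0 ≤ l1 := div_nonneg (by linarith) hsR.le
      have hl2 : 0 ≤ l2 := div_nonneg hz1.le hsR.le
      have hl3 : 0 ≤ l3 := by
        have hle : l1 + l2 ≤ 1 := by
          rw [hl1def, hl2def, ← add_div, div_le_one hsR]
          linarith
        rw [hl3def]; linarith
      have hcombo : z = l1 • toReal2 a + l2 • toReal2 b + l3 • toReal2 c := by
        apply hGinj
        funext i
        rw [hGdef, aum_combo M v2 _ _ _ _ _ _ hsum i, ← hGdef]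
        fin_cases i
        · show G z 0 = l1 * G (toReal2 a) 0 + l2 * G (toReal2 b) 0 + l3 * G (toReal2 c) 0
          rw [ga0, gb0, gc0, ← hXrdef, hl2def]
          field_simp
          ring
        · show G z 1 = l1 * G (toReal2 a) 1 + l2 * G (toReal2 b) 1 + l3 * G (toReal2 c) 1
          rw [ga1, gb1, gc1, ← hYrdef, hl1def, hl2def]
          field_simp
          ring
      rw [hcombo]
      exact combo_mem_hull _ _ _ hl1 hl2 hl3 hsum
    -- p is an interior lattice point: contradiction
    have hmem : toReal2 p ∈ O := by
      rw [hOdef]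
      refine ⟨⟨?_, ?_⟩, ?_⟩ <;> simp only [Set.mem_setOf_eq]
      · rw [gp0]; exact_mod_cast hx1
      · rw [gp0, gp1]
        have hlt : s * qy < t' * x := by
          have e : s * qy = t' * x - 1 := hqy.symm
          rw [e]
          generalize t' * x = u
          omega
        exact_mod_cast hlt
      · rw [gp0, gp1]
        have hlt : (t' + 1) * x < s * (qy + 1) := by
          have e : s * (qy + 1) = t' * x - 1 + s := by rw [mul_add, mul_one, ← hqy]
          have e2 : (t' + 1) * x = t' * x + x := by ring
          rw [e, e2]
          have h3 : x < s - 1 := by omega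
          generalize t' * x = u
          omega
        exact_mod_cast hlt
    exact hint p (mem_interior.mpr ⟨O, hOsub, hOopen, hmem⟩)
/-- An `A_m`-triangle, i.e. a lattice triangle without interior lattice points whose
edges have lattice lengths `1`, `1` and `m+1` in some order, is unimodularly equivalent
to the triangle `conv{(0,0),(m+1,0),(0,1)}`. -/
theorem Am_triangle_is_standard
    (m : ℕ) (hm : 1 ≤ m) (a b c : Fin 2 → ℤ)
    (hind : AffineIndependent ℝ ![toReal2 a, toReal2 b, toReal2 c])
    (hint : ∀ p : Fin 2 → ℤ,
      toReal2 p ∉ interior (convexHull ℝ ({toReal2 a, toReal2 b, toReal2 c} : Set (Fin 2 → ℝ))))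
    (hlen : ({latticeLength a b, latticeLength b c, latticeLength c a} : Multiset ℕ) =
      ({1, 1, m + 1} : Multiset ℕ)) :
    ∃ (A : Matrix (Fin 2) (Fin 2) ℤ) (v : Fin 2 → ℤ),
      (A.det = 1 ∨ A.det = -1) ∧
      affineUnimodularMap A v ''
          convexHull ℝ ({toReal2 a, toReal2 b, toReal2 c} : Set (Fin 2 → ℝ)) =
        convexHull ℝ ({![0, 0], ![(m : ℝ) + 1, 0], ![0, 1]} : Set (Fin 2 → ℝ)) := by
  have hcol : ¬ Collinear ℝ ({toReal2 a, toReal2 b, toReal2 c} : Set (Fin 2 → ℝ)) :=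
    affineIndependent_iff_not_collinear_set.mp hind
  rcases multiset_cases (by omega : m + 1 ≠ 1) hlen with ⟨e1, e2, e3⟩ | ⟨e1, e2, e3⟩ |
    ⟨e1, e2, e3⟩
  · exact main_case m a b c hcol hint e1 e2 e3
  · have hset : ({toReal2 b, toReal2 c, toReal2 a} : Set (Fin 2 → ℝ)) =
        {toReal2 a, toReal2 b, toReal2 c} := by
      ext z; simp only [Set.mem_insert_iff, Set.mem_singleton_iff]; tauto
    obtain ⟨A, v, hd, him⟩ := main_case m b c a (by rwa [hset])
      (by intro pp; rw [hset]; exact hint pp) e2 e3 e1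
    exact ⟨A, v, hd, by rwa [hset] at him⟩
  · have hset : ({toReal2 c, toReal2 a, toReal2 b} : Set (Fin 2 → ℝ)) =
        {toReal2 a, toReal2 b, toReal2 c} := by
      ext z; simp only [Set.mem_insert_iff, Set.mem_singleton_iff]; tauto
    obtain ⟨A, v, hd, him⟩ := main_case m c a b (by rwa [hset])
      (by intro pp; rw [hset]; exact hint pp) e3 e1 e2
    exact ⟨A, v, hd, by rwa [hset] at him⟩
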